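/- arXiv:1609.00170 — 5 statements merged into one kernel-verified Lean document; each statement's English description precedes it below -/
import Mathlib

section
/- Let d ≥ 1, β ∈ (0,1), and set ζ = ((d+1) - (d-1)β² - √(((d+1)² - (d-1)²β²)(1 - β²)))/(2β). Then the quantity S = (1/β)·(β - ζ)/(1 - βζ) satisfies 0 < S < 1, and S → 1 as β → 1⁻. -/
open Filter Real

private lemma blaschke_aux1 (A B β su sP : ℝ) (hAmB : A - B = 2) (hβ0 : 0 < β)
    (hsu2 : su ^ 2 = 1 - β ^ 2) :
    β - (A - B * β ^ 2 - sP * su) / (2 * β) = su * (sP - A * su) / (2 * β) := by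
  field_simp
  linear_combination A*hsu2 - β^2*hAmB

private lemma blaschke_aux2 (A B β su sP : ℝ) (hAmB : A - B = 2) (hβ0 : 0 < β)
    (hsu2 : su ^ 2 = 1 - β ^ 2) :
    1 - β * ((A - B * β ^ 2 - sP * su) / (2 * β)) = su * (sP - B * su) / 2 := by
  field_simp
  linear_combination B*hsu2 - hAmB

private lemma blaschke_aux3 (β su x y : ℝ) (hβ : β ≠ 0) (hsu : su ≠ 0) (hy : y ≠ 0) :
    (1 / β) * ((su * x / (2 * β)) / (su * y / 2)) = x / (β ^ 2 * y) := by
  field_simp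

theorem blaschke_ratio_S (d : ℕ) (hd : 1 ≤ d)
    (ζ : ℝ → ℝ)
    (hζ : ζ = fun β => ((d + 1 : ℝ) - (d - 1 : ℝ) * β ^ 2 -
        Real.sqrt (((d + 1 : ℝ) ^ 2 - (d - 1 : ℝ) ^ 2 * β ^ 2) * (1 - β ^ 2))) / (2 * β))
    (S : ℝ → ℝ)
    (hS : S = fun β => (1 / β) * ((β - ζ β) / (1 - β * ζ β))) :
    (∀ β ∈ Set.Ioo (0:ℝ) 1, 0 < S β ∧ S β < 1) ∧
      Tendsto S (nhdsWithin 1 (Set.Iio 1)) (nhds 1) := by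
  have hd1 : (1:ℝ) ≤ (d:ℝ) := by exact_mod_cast hd
  set A : ℝ := (d:ℝ) + 1 with hA
  set B : ℝ := (d:ℝ) - 1 with hB
  have hB0 : 0 ≤ B := by simp [hB]; linarith
  have hA2 : (2:ℝ) ≤ A := by simp [hA]; linarith
  have hAmB : A - B = 2 := by simp [hA, hB]; ring
  have hAB : A ^ 2 - B ^ 2 = 4 * (d:ℝ) := by simp [hA, hB]; ring
  have hABpos : 0 < A ^ 2 - B ^ 2 := by rw [hAB]; positivity
  set T : ℝ → ℝ := fun β =>
    (Real.sqrt (A ^ 2 - B ^ 2 * β ^ 2) - A * Real.sqrt (1 - β ^ 2)) /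
      (β ^ 2 * (Real.sqrt (A ^ 2 - B ^ 2 * β ^ 2) - B * Real.sqrt (1 - β ^ 2))) with hT
  have key : ∀ β ∈ Set.Ioo (0:ℝ) 1, S β = T β ∧ 0 < T β ∧ T β < 1 := by
    rintro β ⟨hβ0, hβ1⟩
    have hu : 0 < 1 - β ^ 2 := by nlinarith
    have hP : 0 < A ^ 2 - B ^ 2 * β ^ 2 := by nlinarith
    have hsu : 0 < Real.sqrt (1 - β ^ 2) := Real.sqrt_pos.2 hu
    have hsP : 0 < Real.sqrt (A ^ 2 - B ^ 2 * β ^ 2) := Real.sqrt_pos.2 hP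
    have hsu2 : Real.sqrt (1 - β ^ 2) ^ 2 = 1 - β ^ 2 := Real.sq_sqrt hu.le
    have hsP2 : Real.sqrt (A ^ 2 - B ^ 2 * β ^ 2) ^ 2 = A ^ 2 - B ^ 2 * β ^ 2 :=
      Real.sq_sqrt hP.le
    have hAu : A * Real.sqrt (1 - β ^ 2) < Real.sqrt (A ^ 2 - B ^ 2 * β ^ 2) := by
      have h1 : Real.sqrt ((A * Real.sqrt (1 - β ^ 2)) ^ 2) <
          Real.sqrt (A ^ 2 - B ^ 2 * β ^ 2) := by
        apply Real.sqrt_lt_sqrt (sq_nonneg _)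
        rw [mul_pow, hsu2]
        nlinarith
      rwa [Real.sqrt_sq (by positivity)] at h1
    have hBu : B * Real.sqrt (1 - β ^ 2) < Real.sqrt (A ^ 2 - B ^ 2 * β ^ 2) := by
      have h1 : Real.sqrt ((B * Real.sqrt (1 - β ^ 2)) ^ 2) <
          Real.sqrt (A ^ 2 - B ^ 2 * β ^ 2) := by
        apply Real.sqrt_lt_sqrt (sq_nonneg _)
        rw [mul_pow, hsu2]
        nlinarith
      rwa [Real.sqrt_sq (by positivity)] at h1
    have hsmul : Real.sqrt ((A ^ 2 - B ^ 2 * β ^ 2) * (1 - β ^ 2)) =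
        Real.sqrt (A ^ 2 - B ^ 2 * β ^ 2) * Real.sqrt (1 - β ^ 2) :=
      Real.sqrt_mul hP.le _
    have hprod : Real.sqrt (1 - β ^ 2) * Real.sqrt (A ^ 2 - B ^ 2 * β ^ 2)
        < A - B * β ^ 2 := by
      have hkey : (A - B * β ^ 2) ^ 2 - (1 - β ^ 2) * (A ^ 2 - B ^ 2 * β ^ 2)
          = β ^ 2 * (A - B) ^ 2 := by ring
      rw [hAmB] at hkey
      have h1 : Real.sqrt ((1 - β ^ 2) * (A ^ 2 - B ^ 2 * β ^ 2)) <
          Real.sqrt ((A - B * β ^ 2) ^ 2) := by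
        apply Real.sqrt_lt_sqrt (by positivity)
        nlinarith
      rwa [Real.sqrt_mul hu.le, Real.sqrt_sq (by nlinarith)] at h1
    have hSeq : S β = T β := by
      rw [hS, hT]
      simp only
      rw [hζ]
      simp only [← hA, ← hB, hsmul]
      rw [blaschke_aux1 A B β _ _ hAmB hβ0 hsu2,
        blaschke_aux2 A B β _ _ hAmB hβ0 hsu2,
        blaschke_aux3 _ _ _ _ hβ0.ne' hsu.ne' (by linarith)]
    have hTpos : 0 < T β := by
      simp only [hT]
      exact div_pos (by linarith) (mul_pos (pow_pos hβ0 2) (by linarith))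
    have hTlt : T β < 1 := by
      have hmul : (1 - β ^ 2) * Real.sqrt (A ^ 2 - B ^ 2 * β ^ 2) <
          Real.sqrt (1 - β ^ 2) * (A - B * β ^ 2) := by
        calc (1 - β ^ 2) * Real.sqrt (A ^ 2 - B ^ 2 * β ^ 2)
            = Real.sqrt (1 - β ^ 2) *
              (Real.sqrt (1 - β ^ 2) * Real.sqrt (A ^ 2 - B ^ 2 * β ^ 2)) := by
              rw [← mul_assoc, ← sq, hsu2]
          _ < Real.sqrt (1 - β ^ 2) * (A - B * β ^ 2) :=
              mul_lt_mul_of_pos_left hprod hsu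
      simp only [hT]
      rw [div_lt_one (mul_pos (pow_pos hβ0 2) (by linarith))]
      linarith [hmul]
    exact ⟨hSeq, hTpos, hTlt⟩
  constructor
  · intro β hβ
    obtain ⟨hSeq, hp1, hp2⟩ := key β hβ
    exact ⟨hSeq ▸ hp1, hSeq ▸ hp2⟩
  · have hsne : Real.sqrt (A ^ 2 - B ^ 2) ≠ 0 :=
      ne_of_gt (Real.sqrt_pos.2 hABpos)
    have h110 : (1:ℝ) - 1 ^ 2 = 0 := by norm_num
    have hT1 : T 1 = 1 := by
      simp only [hT, one_pow, mul_one, one_mul, show (1:ℝ) - 1 = 0 from by norm_num,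
        Real.sqrt_zero, mul_zero, sub_zero]
      exact div_self hsne
    have hcont : ContinuousAt T 1 := by
      rw [hT]
      apply ContinuousAt.div
      · fun_prop
      · fun_prop
      · simp only [one_pow, mul_one, one_mul, show (1:ℝ) - 1 = 0 from by norm_num,
          Real.sqrt_zero, mul_zero, sub_zero]
        exact hsne
    have hTtend : Tendsto T (nhdsWithin 1 (Set.Iio 1)) (nhds 1) := by
      have h := hcont.tendsto.mono_left
        (nhdsWithin_le_nhds : nhdsWithin (1:ℝ) (Set.Iio 1) ≤ nhds 1)
      rwa [hT1] at h
    have hEq : T =ᶠ[nhdsWithin (1:ℝ) (Set.Iio 1)] S := by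
      have hm : Set.Ioo (0:ℝ) 1 ∈ nhdsWithin (1:ℝ) (Set.Iio 1) :=
        Ioo_mem_nhdsLT_of_mem (by norm_num)
      filter_upwards [hm] with β hβ
      exact ((key β hβ).1).symm
    exact Tendsto.congr' hEq hTtend
end

section
/- K_n ≥ 1 for all n ≥ 3, where K_n = sup{S(B) : B ∈ 𝔅(n)} and S(B) = min{|B(ζ)/(ζ B'(0))| : B'(ζ) = 0, ζ ∈ D}. -/
open Complex

section
open Polynomial Finset



set_option maxHeartbeats 1000000 in
lemma real_core (M ε δ a c s u v t : ℝ)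
    (hM : 2 ≤ M) (hε : 0 < ε)
    (hδ0 : 0 < δ) (hδhalf : δ ≤ 2⁻¹)
    (hδM : 8 * (M - 1) ^ 2 * δ ≤ (M + 1)) (hδε : δ ≤ (ε / 13) ^ 2)
    (ha : a = 1 - δ) (hc : c = (M + 1) - a ^ 2 * (M - 1))
    (hs0 : 0 ≤ s) (hs2 : s ^ 2 = c ^ 2 - 4 * a ^ 2)
    (hu0 : 0 ≤ u) (hu2 : u ^ 2 = 2 * (M + 1) * δ) (hus : u ≤ s)
    (hv0 : 0 ≤ v) (hv2 : v ^ 2 = δ) (hvε : v ≤ ε / 13)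
    (ht : t = (s - c) / (2 * a)) :
    0 < a ∧ a < 1 ∧ -1 < t ∧ t < 0 ∧
      a * t ^ 2 + c * t + a = 0 ∧
      0 < 1 + a * t ∧ 0 < t + a ∧
      1 - ε < (t + a) / (a * (1 + a * t)) := by
  have hM1 : (0:ℝ) < M - 1 := by linarith
  have ha0 : (2:ℝ)⁻¹ ≤ a := by rw [ha]; linarith
  have ha0' : 0 < a := by linarith
  have ha1 : a < 1 := by rw [ha]; linarith
  have ha2 : a ^ 2 < 1 := by
    have h1 : a * a < 1 * 1 := mul_lt_mul' ha1.le ha1 ha0'.le one_pos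
    calc a ^ 2 = a * a := sq a
    _ < 1 := by linarith
  have hc2 : 2 ≤ c := by
    have h1 : a ^ 2 * (M - 1) ≤ 1 * (M - 1) :=
      mul_le_mul_of_nonneg_right ha2.le hM1.le
    rw [hc]; linarith
  have hc2a : c - 2 * a = δ * ((M - 1) * a + (M + 1)) := by rw [hc, ha]; ring
  have hc2apos : δ * (M + 1) ≤ c - 2 * a := by
    have h1 : 0 ≤ δ * ((M - 1) * a) := by positivity
    have h2 : δ * ((M - 1) * a + (M + 1)) = δ * ((M - 1) * a) + δ * (M + 1) := by ring
    linarith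
  have hMδ : 0 < δ * (M + 1) := by positivity
  have hc2a0 : 0 < c - 2 * a := lt_of_lt_of_le hMδ hc2apos
  -- t < 0
  have hsc : s < c := by
    by_contra h
    push_neg at h
    have h2 := pow_le_pow_left₀ (by linarith : (0:ℝ) ≤ c) h 2
    have h3 : (0:ℝ) < a ^ 2 := by positivity
    linarith
  have ht0 : t < 0 := by rw [ht]; apply div_neg_of_neg_of_pos <;> linarith
  -- -1 < t
  have hsgt : c - 2 * a < s := by
    by_contra h
    push_neg at h
    have h2 := pow_le_pow_left₀ hs0 h 2
    have h3 : 0 < a * (c - 2 * a) := mul_pos ha0' hc2a0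
    linarith [h2, hs2, h3]
  have ht1 : -1 < t := by rw [ht, lt_div_iff₀ (by linarith : (0:ℝ) < 2 * a)]; linarith
  -- the quadratic equation
  have heq : a * t ^ 2 + c * t + a = 0 := by
    have h4 : 4 * a * (a * t ^ 2 + c * t + a) = s ^ 2 - c ^ 2 + 4 * a ^ 2 := by
      rw [ht]; field_simp; ring
    have h5 : 4 * a * (a * t ^ 2 + c * t + a) = 0 := by rw [h4]; linarith
    have h6 : (4:ℝ) * a ≠ 0 := by positivity
    exact (mul_eq_zero.mp h5).resolve_left h6
  -- lower bound on 1 + a t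
  have e1 : 16 * (M - 1) ^ 2 * δ ^ 2 ≤ 2 * (M + 1) * δ := by
    have h1 := mul_le_mul_of_nonneg_left hδM (by positivity : (0:ℝ) ≤ 2 * δ)
    linarith [h1]
  have e3 : 4 * (M - 1) * δ ≤ u := by
    by_contra h
    push_neg at h
    have h2 := pow_lt_pow_left₀ h hu0 (by norm_num : 2 ≠ 0)
    linarith [h2, hu2, e1]
  have hu4 : 2 * (M - 1) * δ ≤ u / 2 := by linarith
  have h1at : u / 4 ≤ 1 + a * t := by
    have hat : 1 + a * t = (2 - c + s) / 2 := by rw [ht]; field_simp; ring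
    have h2c : 2 - c = -((M - 1) * δ * (1 + a)) := by rw [hc, ha]; ring
    have hb : (M - 1) * δ * (1 + a) ≤ (M - 1) * δ * 2 :=
      mul_le_mul_of_nonneg_left (by linarith) (by positivity)
    linarith [hat, h2c, hb, hus, hu4]
  have hu0' : 0 < u := by
    have h1 := mul_pos hM1 hδ0
    linarith [hu4, h1]
  have hat0 : 0 < 1 + a * t := by linarith
  -- t + a > 0
  have hta : 0 < t + a := by
    have hca2 : 0 < c - 2 * a ^ 2 := by linarith
    have hq : c - 1 - a ^ 2 = M * (1 - a ^ 2) := by rw [hc]; ring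
    have hqpos : 0 < M * (1 - a ^ 2) := mul_pos (by linarith) (by linarith)
    have hkey : c - 2 * a ^ 2 < s := by
      by_contra h
      push_neg at h
      have h2 := pow_le_pow_left₀ hs0 h 2
      have h4 : 0 < 4 * a ^ 2 * (M * (1 - a ^ 2)) := by positivity
      have hq4 : 4 * a ^ 2 * (c - 1 - a ^ 2) = 4 * a ^ 2 * (M * (1 - a ^ 2)) := by
        rw [hq]
      have hid : (c - 2 * a ^ 2) ^ 2 = c ^ 2 - 4 * a ^ 2 - 4 * a ^ 2 * (c - 1 - a ^ 2) := by
        ring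
      linarith
    rw [ht, div_add' _ _ _ (by linarith : (2:ℝ) * a ≠ 0)]
    apply div_pos (by linarith [hkey]) (by linarith)
  -- final bound
  have huv : 2 * v ≤ u := by
    by_contra h
    push_neg at h
    have h2 := pow_lt_pow_left₀ h hu0 (by norm_num : 2 ≠ 0)
    have h3 := mul_pos hδ0 hM1
    linarith [h2, hu2, hv2, h3]
  have hv0' : 0 < v := by
    rcases eq_or_lt_of_le hv0 with h | h
    · exfalso; rw [← h] at hv2; simp at hv2; linarith
    · exact h
  have hkey : (-t) * (1 - a ^ 2) < ε * (a * (1 + a * t)) := by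
    have hma : 1 - a ^ 2 ≤ 2 * δ := by rw [ha]; linarith [sq_nonneg δ]
    have h1 : (-t) * (1 - a ^ 2) ≤ 2 * v ^ 2 := by
      have hint := mul_le_mul_of_nonneg_right (show -t ≤ 1 by linarith)
        (show (0:ℝ) ≤ 1 - a ^ 2 by linarith)
      linarith [hint, hma, hv2]
    have h2a : v / 4 ≤ a * (1 + a * t) := by
      have hint := mul_le_mul_of_nonneg_right ha0 (le_of_lt hat0)
      linarith [hint, h1at, huv]
    have h2 : ε * (v / 4) ≤ ε * (a * (1 + a * t)) :=
      mul_le_mul_of_nonneg_left h2a hε.le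
    have h3 : 2 * v ^ 2 ≤ 2 * (ε / 13) * v := by
      have hint := mul_le_mul_of_nonneg_right hvε hv0
      linarith [hint]
    linarith [h1, h2, h3, mul_pos hε hv0']
  refine ⟨ha0', ha1, ht1, ht0, heq, hat0, hta, ?_⟩
  rw [lt_div_iff₀ (by positivity)]
  linarith [hkey]

lemma D_low (M δ a c : ℝ) (hM : 2 ≤ M) (hδ0 : 0 < δ) (hδhalf : δ ≤ 2⁻¹)
    (ha : a = 1 - δ) (hc : c = (M + 1) - a ^ 2 * (M - 1)) :
    2 * (M + 1) * δ ≤ c ^ 2 - 4 * a ^ 2 := by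
  have hM1 : (0:ℝ) < M - 1 := by linarith
  have ha0 : (2:ℝ)⁻¹ ≤ a := by rw [ha]; linarith
  have ha0' : 0 < a := by linarith
  have ha1 : a ≤ 1 := by rw [ha]; linarith
  have ha2 : a ^ 2 ≤ 1 := by
    have h1 : a * a ≤ 1 * 1 := mul_le_mul ha1 ha1 ha0'.le one_pos.le
    calc a ^ 2 = a * a := sq a
    _ ≤ 1 := by linarith
  have hc2 : 2 ≤ c := by
    have h1 : a ^ 2 * (M - 1) ≤ 1 * (M - 1) :=
      mul_le_mul_of_nonneg_right ha2 hM1.le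
    rw [hc]; linarith
  have hc2a : c - 2 * a = δ * ((M - 1) * a + (M + 1)) := by rw [hc, ha]; ring
  have hc2apos : δ * (M + 1) ≤ c - 2 * a := by
    have h1 : 0 ≤ δ * ((M - 1) * a) := by positivity
    have h2 : δ * ((M - 1) * a + (M + 1)) = δ * ((M - 1) * a) + δ * (M + 1) := by ring
    linarith
  have h3 : δ * (M + 1) * 2 ≤ (c - 2 * a) * (c + 2 * a) := by
    apply mul_le_mul hc2apos (by linarith) (by norm_num) (by linarith)
  have h4 : (c - 2 * a) * (c + 2 * a) = c ^ 2 - 4 * a ^ 2 := by ring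
  linarith

lemma real_aux (M ε : ℝ) (hM : 2 ≤ M) (hε : 0 < ε) :
    ∃ a t : ℝ, 0 < a ∧ a < 1 ∧ -1 < t ∧ t < 0 ∧
      a * t ^ 2 + ((M + 1) - a ^ 2 * (M - 1)) * t + a = 0 ∧
      0 < 1 + a * t ∧ 0 < t + a ∧
      1 - ε < (t + a) / (a * (1 + a * t)) := by
  have hM1 : (0:ℝ) < M - 1 := by linarith
  obtain ⟨δ, hδ0, hδhalf, hδM', hδε⟩ :
      ∃ δ : ℝ, 0 < δ ∧ δ ≤ 2⁻¹ ∧ δ ≤ (M + 1) / (8 * (M - 1) ^ 2) ∧ δ ≤ (ε / 13) ^ 2 := by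
    refine ⟨min (min 2⁻¹ ((M + 1) / (8 * (M - 1) ^ 2))) ((ε / 13) ^ 2), ?_, ?_, ?_, ?_⟩
    · exact lt_min (lt_min (by norm_num) (by positivity)) (by positivity)
    · exact le_trans (min_le_left _ _) (min_le_left _ _)
    · exact le_trans (min_le_left _ _) (min_le_right _ _)
    · exact min_le_right _ _
  have hδM : 8 * (M - 1) ^ 2 * δ ≤ M + 1 := by
    have h0 : (0:ℝ) < 8 * (M - 1) ^ 2 := by positivity
    calc 8 * (M - 1) ^ 2 * δ ≤ 8 * (M - 1) ^ 2 * ((M + 1) / (8 * (M - 1) ^ 2)) :=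
          mul_le_mul_of_nonneg_left hδM' h0.le
    _ = M + 1 := by field_simp
  have hDlow := D_low M δ (1 - δ) ((M + 1) - (1 - δ) ^ 2 * (M - 1)) hM hδ0 hδhalf rfl rfl
  have hD0 : 0 ≤ ((M + 1) - (1 - δ) ^ 2 * (M - 1)) ^ 2 - 4 * (1 - δ) ^ 2 := by
    have : 0 ≤ 2 * (M + 1) * δ := by positivity
    linarith
  obtain ⟨ha0, ha1, ht1, ht0, heq, hat0, hta, hfin⟩ :=
    real_core M ε δ (1 - δ) ((M + 1) - (1 - δ) ^ 2 * (M - 1))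
      (Real.sqrt (((M + 1) - (1 - δ) ^ 2 * (M - 1)) ^ 2 - 4 * (1 - δ) ^ 2))
      (Real.sqrt (2 * (M + 1) * δ)) (Real.sqrt δ)
      ((Real.sqrt (((M + 1) - (1 - δ) ^ 2 * (M - 1)) ^ 2 - 4 * (1 - δ) ^ 2)
        - ((M + 1) - (1 - δ) ^ 2 * (M - 1))) / (2 * (1 - δ)))
      hM hε hδ0 hδhalf hδM hδε rfl rfl
      (Real.sqrt_nonneg _) (Real.sq_sqrt hD0)
      (Real.sqrt_nonneg _) (Real.sq_sqrt (by positivity)) (Real.sqrt_le_sqrt hDlow)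
      (Real.sqrt_nonneg _) (Real.sq_sqrt hδ0.le)
      (by calc Real.sqrt δ ≤ Real.sqrt ((ε / 13) ^ 2) := Real.sqrt_le_sqrt hδε
          _ = ε / 13 := Real.sqrt_sq (by positivity))
      rfl
  exact ⟨1 - δ, _, ha0, ha1, ht1, ht0, heq, hat0, hta, hfin⟩




lemma prod_lin (m : ℕ) (hm : 0 < m) {ζ α b : ℂ} (hζ : IsPrimitiveRoot ζ m)
    (e : α ^ m = b) (w : ℂ) :
    ∏ i ∈ Finset.range m, (w - ζ ^ i * α) = w ^ m - b := by
  have h := congrArg (Polynomial.eval w) (X_pow_sub_C_eq_prod hζ hm e)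
  rw [eval_sub, eval_pow, eval_X, eval_C, eval_prod] at h
  rw [h]
  exact Finset.prod_congr rfl fun i _ => by simp

lemma norm_lt_one_of_pow {m : ℕ} (hm : m ≠ 0) {x : ℂ} (h : ‖x ^ m‖ < 1) :
    ‖x‖ < 1 := by
  by_contra hx
  push_neg at hx
  rw [norm_pow] at h
  have : (1:ℝ) ≤ ‖x‖ ^ m := one_le_pow₀ hx
  linarith


set_option maxHeartbeats 1000000 in
/-- `K_n ≥ 1` for `n ≥ 3`: for every `ε > 0` there is a finite Blaschke product `B`
of degree `n` with `B(0) = 0`, `B'(0) ≠ 0`, all of whose critical points `ζ` in the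
unit disk satisfy `|B(ζ)/(ζ B'(0))| > 1 - ε`. -/
theorem K_n_ge_one (n : ℕ) (hn : 3 ≤ n) (ε : ℝ) (hε : 0 < ε) :
    ∃ (z : Fin (n - 1) → ℂ) (B : ℂ → ℂ),
      (∀ k, ‖z k‖ < 1) ∧
      B = (fun w => w * ∏ k, (w - z k) / (1 - (starRingEnd ℂ) (z k) * w)) ∧
      deriv B 0 ≠ 0 ∧
      (∃ ζ : ℂ, ‖ζ‖ < 1 ∧ deriv B ζ = 0) ∧
      ∀ ζ : ℂ, ‖ζ‖ < 1 → deriv B ζ = 0 →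
        1 - ε < ‖B ζ / (ζ * deriv B 0)‖ := by
  obtain ⟨p, hp⟩ : ∃ p, n - 1 = p + 2 := ⟨n - 3, by omega⟩
  rw [hp]
  -- the real parameters
  obtain ⟨a, t, ha0, ha1, ht1, ht0, heq, hat0, hta0, hV⟩ :=
    real_aux ((p:ℝ) + 2) ε (by linarith [Nat.cast_nonneg (α := ℝ) p]) hε
  have haC : (a:ℂ) ≠ 0 := by exact_mod_cast ha0.ne'
  have htC : (t:ℂ) ≠ 0 := by exact_mod_cast ht0.ne
  have htnorm : ‖(t:ℂ)‖ < 1 := by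
    rw [Complex.norm_real, Real.norm_eq_abs, abs_lt]
    exact ⟨ht1, by linarith⟩
  -- complex setup
  set N : ℕ := p + 2 with hNdef
  have hN0 : N ≠ 0 := by omega
  have hζprim : IsPrimitiveRoot (Complex.exp (2 * (Real.pi:ℂ) * I / N)) N :=
    Complex.isPrimitiveRoot_exp N hN0
  set ζ : ℂ := Complex.exp (2 * (Real.pi:ℂ) * I / N) with hζdef
  have hζnorm : ‖ζ‖ = 1 := Complex.norm_eq_one_of_pow_eq_one hζprim.pow_eq_one hN0
  have hζne : ζ ≠ 0 := by
    intro h; rw [h] at hζnorm; simp at hζnorm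
  set α : ℂ := (-(a:ℂ)) ^ ((N:ℂ)⁻¹) with hαdef
  have hαm : α ^ N = -(a:ℂ) := Complex.cpow_nat_inv_pow _ hN0
  have hαne : α ≠ 0 := by
    intro h
    rw [h, zero_pow hN0] at hαm
    exact haC (neg_eq_zero.mp hαm.symm)
  have hαnorm : ‖α‖ < 1 := by
    apply norm_lt_one_of_pow hN0
    rw [hαm, norm_neg, Complex.norm_real, Real.norm_eq_abs, abs_lt]
    exact ⟨by linarith, ha1⟩
  set z : Fin N → ℂ := fun k => ζ ^ (k:ℕ) * α with hzdef
  have hznorm : ∀ k, ‖z k‖ < 1 := by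
    intro k
    rw [hzdef]
    simp only [norm_mul, norm_pow, hζnorm, one_pow, one_mul]
    exact hαnorm
  -- product identities
  have hP : ∀ w : ℂ, ∏ k : Fin N, (w - z k) = w ^ N + (a:ℂ) := by
    intro w
    rw [show ∏ k : Fin N, (w - z k) = ∏ i ∈ Finset.range N, (w - ζ ^ i * α) from
      Fin.prod_univ_eq_prod_range (fun i => w - ζ ^ i * α) N]
    rw [prod_lin N (by omega) hζprim hαm w]
    ring
  have hprodz : ∏ k : Fin N, (-(z k)) = (a:ℂ) := by
    have h := hP 0
    rw [zero_pow hN0, zero_add] at h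
    rw [← h]
    exact Finset.prod_congr rfl fun i _ => by ring
  -- conjugate product
  set β : ℂ := ((starRingEnd ℂ) α)⁻¹ with hβdef
  have hβm : β ^ N = (-(a:ℂ))⁻¹ := by
    rw [hβdef, inv_pow, ← map_pow, hαm]
    simp [Complex.conj_ofReal]
  have hconjζζ : (starRingEnd ℂ) ζ * ζ = 1 := by
    rw [mul_comm, Complex.mul_conj, Complex.normSq_eq_norm_sq, hζnorm]
    norm_num
  have hfac : ∀ (k : Fin N) (w : ℂ),
      1 - (starRingEnd ℂ) (z k) * w = (-(starRingEnd ℂ) (z k)) * (w - ζ ^ (k:ℕ) * β) := by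
    intro k w
    have h1 : (starRingEnd ℂ) (z k) * (ζ ^ (k:ℕ) * β) = 1 := by
      rw [hzdef]
      simp only [map_mul, map_pow]
      rw [hβdef]
      have hca : (starRingEnd ℂ) α ≠ 0 := by
        simpa using hαne
      have h2 : ((starRingEnd ℂ) ζ * ζ) ^ (k:ℕ) = 1 := by rw [hconjζζ, one_pow]
      field_simp
      linear_combination h2
    linear_combination -h1
  have hQ : ∀ w : ℂ, ∏ k : Fin N, (1 - (starRingEnd ℂ) (z k) * w)
      = 1 + (a:ℂ) * w ^ N := by
    intro w
    calc ∏ k : Fin N, (1 - (starRingEnd ℂ) (z k) * w)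
        = ∏ k : Fin N, ((-(starRingEnd ℂ) (z k)) * (w - ζ ^ (k:ℕ) * β)) :=
          Finset.prod_congr rfl fun k _ => hfac k w
      _ = (∏ k : Fin N, (-(starRingEnd ℂ) (z k))) * ∏ k : Fin N, (w - ζ ^ (k:ℕ) * β) :=
          Finset.prod_mul_distrib
      _ = (a:ℂ) * (w ^ N - (-(a:ℂ))⁻¹) := by
          congr 1
          · calc ∏ k : Fin N, (-(starRingEnd ℂ) (z k))
                = (starRingEnd ℂ) (∏ k : Fin N, (-(z k))) := by
                  rw [map_prod]
                  exact Finset.prod_congr rfl fun k _ => by rw [map_neg]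
              _ = (a:ℂ) := by rw [hprodz, Complex.conj_ofReal]
          · rw [show ∏ k : Fin N, (w - ζ ^ (k:ℕ) * β)
                = ∏ i ∈ Finset.range N, (w - ζ ^ i * β) from
                Fin.prod_univ_eq_prod_range (fun i => w - ζ ^ i * β) N]
            exact prod_lin N (by omega) hζprim hβm w
      _ = 1 + (a:ℂ) * w ^ N := by
          field_simp
          linear_combination
  -- the function g
  set g : ℂ → ℂ := fun w => (w ^ (N + 1) + (a:ℂ) * w) / (1 + (a:ℂ) * w ^ N) with hgdef
  have hBg : (fun w : ℂ => w * ∏ k : Fin N, (w - z k) / (1 - (starRingEnd ℂ) (z k) * w)) = g := by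
    funext w
    rw [Finset.prod_div_distrib, hP w, hQ w, hgdef]
    rw [mul_div_assoc']
    congr 1
    ring
  -- nonvanishing denominator
  have hDne : ∀ w : ℂ, ‖w‖ < 1 → 1 + (a:ℂ) * w ^ N ≠ 0 := by
    intro w hw h0
    have h1 : ‖(a:ℂ) * w ^ N‖ < 1 := by
      rw [norm_mul, norm_pow, Complex.norm_real, Real.norm_eq_abs, abs_of_pos ha0]
      have h2 : ‖w‖ ^ N ≤ 1 := pow_le_one₀ (norm_nonneg w) hw.le
      have h3 : ‖w‖ ^ N < 1 ∨ True := Or.inr trivial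
      calc a * ‖w‖ ^ N ≤ a * 1 := by
            exact mul_le_mul_of_nonneg_left h2 ha0.le
        _ < 1 := by linarith
    have h2 : (a:ℂ) * w ^ N = -1 := by linear_combination h0
    rw [h2] at h1
    simp at h1
  -- derivative of g
  have hg' : ∀ w : ℂ, ‖w‖ < 1 → HasDerivAt g
      (((((N:ℂ) + 1) * w ^ N + a) * (1 + a * w ^ N) -
        (w ^ (N + 1) + a * w) * ((a:ℂ) * ((N:ℂ) * w ^ (N - 1)))) / (1 + (a:ℂ) * w ^ N) ^ 2)
      w := by
    intro w hw
    have hN : HasDerivAt (fun x : ℂ => x ^ (N + 1) + (a:ℂ) * x)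
        (((N:ℂ) + 1) * w ^ N + a) w := by
      have h1 := hasDerivAt_pow (N + 1) w
      have h2 : HasDerivAt (fun x : ℂ => (a:ℂ) * x) a w := by
        simpa using (hasDerivAt_id w).const_mul (a:ℂ)
      have h3 := h1.add h2
      simp only [Nat.cast_add, Nat.cast_one, add_tsub_cancel_right] at h3
      exact h3
    have hDD : HasDerivAt (fun x : ℂ => 1 + (a:ℂ) * x ^ N)
        ((a:ℂ) * ((N:ℂ) * w ^ (N - 1))) w :=
      ((hasDerivAt_pow N w).const_mul (a:ℂ)).const_add 1
    exact hN.div hDD (hDne w hw)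
  -- value of the derivative at 0
  have hg'0 : deriv g 0 = (a:ℂ) := by
    rw [(hg' 0 (by norm_num)).deriv]
    rw [zero_pow hN0, zero_pow (by omega : N + 1 ≠ 0), zero_pow (by omega : N - 1 ≠ 0)]
    norm_num
  -- numerator identity
  set cC : ℂ := ((p:ℂ) + 3) - (a:ℂ) ^ 2 * ((p:ℂ) + 1) with hcCdef
  have hiden : ∀ w : ℂ,
      ((((N:ℂ) + 1) * w ^ N + a) * (1 + a * w ^ N) -
        (w ^ (N + 1) + a * w) * ((a:ℂ) * ((N:ℂ) * w ^ (N - 1))))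
      = (a:ℂ) + cC * w ^ N + a * (w ^ N) ^ 2 := by
    intro w
    have e1 : N - 1 = p + 1 := by omega
    have e2 : N + 1 = p + 3 := by omega
    rw [e1, e2, hcCdef, hNdef]
    push_cast
    ring
  -- cast of the quadratic equation
  have heqC : (a:ℂ) + cC * (t:ℂ) + (a:ℂ) * (t:ℂ) ^ 2 = 0 := by
    have h := congrArg (fun x : ℝ => (x:ℂ)) heq
    push_cast at h
    rw [hcCdef]
    linear_combination h
  -- factorization of the quadratic
  have hinv : (t:ℂ) * (t:ℂ)⁻¹ = 1 := mul_inv_cancel₀ htC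
  have hsum : (a:ℂ) * ((t:ℂ) + (t:ℂ)⁻¹) = -cC := by
    field_simp
    linear_combination heqC
  have hfact : ∀ s : ℂ, (a:ℂ) + cC * s + (a:ℂ) * s ^ 2
      = (a:ℂ) * (s - (t:ℂ)) * (s - (t:ℂ)⁻¹) := by
    intro s
    linear_combination s * hsum - (a:ℂ) * hinv
  -- norm facts about t
  have htinvnorm : 1 < ‖(t:ℂ)⁻¹‖ := by
    rw [norm_inv]
    rw [lt_inv_comm₀ one_pos (norm_pos_iff.mpr htC)]
    simpa using htnorm
  -- characterization of critical points
  have hcrit : ∀ w : ℂ, ‖w‖ < 1 → (deriv g w = 0 ↔ w ^ N = (t:ℂ)) := by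
    intro w hw
    rw [(hg' w hw).deriv]
    constructor
    · intro h0
      have hnum := (_root_.div_eq_zero_iff.mp h0).resolve_right
        (pow_ne_zero 2 (hDne w hw))
      rw [hiden w, hfact (w ^ N)] at hnum
      rcases mul_eq_zero.mp hnum with h1 | h1
      · rcases mul_eq_zero.mp h1 with h2 | h2
        · exact absurd h2 haC
        · linear_combination h2
      · exfalso
        have h2 : w ^ N = (t:ℂ)⁻¹ := by linear_combination h1
        have h3 : ‖w ^ N‖ < 1 := by
          rw [norm_pow]
          exact pow_lt_one₀ (norm_nonneg w) hw hN0
        rw [h2] at h3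
        linarith
    · intro hwt
      rw [_root_.div_eq_zero_iff]
      left
      rw [hiden w, hwt]
      exact heqC
  -- assemble
  refine ⟨z, _, hznorm, rfl, ?_, ?_, ?_⟩
  · rw [hBg, hg'0]
    exact haC
  · refine ⟨(t:ℂ) ^ ((N:ℂ)⁻¹), ?_, ?_⟩
    · exact norm_lt_one_of_pow hN0
        (by rw [Complex.cpow_nat_inv_pow _ hN0]; exact htnorm)
    · rw [hBg]
      exact (hcrit _ (norm_lt_one_of_pow hN0
        (by rw [Complex.cpow_nat_inv_pow _ hN0]; exact htnorm))).mpr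
        (Complex.cpow_nat_inv_pow _ hN0)
  · intro w hw1 hd
    rw [hBg] at hd ⊢
    rw [hg'0]
    have hs := (hcrit w hw1).mp hd
    have hwne : w ≠ 0 := by
      intro h
      rw [h, zero_pow hN0] at hs
      exact htC hs.symm
    have hatC : (1:ℂ) + (a:ℂ) * (t:ℂ) ≠ 0 := by
      have h1 : ((1 + a * t : ℝ) : ℂ) ≠ 0 := by exact_mod_cast hat0.ne'
      push_cast at h1
      exact h1
    have hgval : g w = w * ((t:ℂ) + a) / (1 + (a:ℂ) * t) := by
      rw [hgdef]
      simp only []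
      rw [pow_succ, hs]
      congr 1
      ring
    have hval : g w / (w * (a:ℂ)) = (((t + a) / (a * (1 + a * t)) : ℝ) : ℂ) := by
      rw [hgval]
      push_cast
      field_simp
    rw [show (w * ∏ k : Fin N, (w - z k) / (1 - (starRingEnd ℂ) (z k) * w)) = g w from
      congrFun hBg w]
    rw [hval, Complex.norm_real, Real.norm_eq_abs,
      abs_of_pos (div_pos hta0 (mul_pos ha0 hat0))]
    exact hV

end
end

section
/- K_2 = 1 and the supremum is not attained: for every finite Blaschke product B of degree 2 with B(0) = 0, B'(0) ≠ 0, and critical point ζ ∈ D, one has |B(ζ)/(ζ B'(0))| < 1, yet the supremum over all such B equals 1. -/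
open Complex

private lemma norm_conj_mul_lt (a z : ℂ) (ha : ‖a‖ < 1) (hz : ‖z‖ < 1) :
    ‖(starRingEnd ℂ) a * z‖ < 1 := by
  rw [norm_mul, RCLike.norm_conj]
  nlinarith [norm_nonneg a, norm_nonneg z]

private lemma one_sub_ne (a z : ℂ) (ha : ‖a‖ < 1) (hz : ‖z‖ < 1) :
    1 - (starRingEnd ℂ) a * z ≠ 0 := by
  intro h
  have h1 : (starRingEnd ℂ) a * z = 1 := by linear_combination -h
  have h2 := norm_conj_mul_lt a z ha hz
  rw [h1, norm_one] at h2
  exact lt_irrefl 1 h2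

private lemma deriv_formula (c a z : ℂ) (h : 1 - (starRingEnd ℂ) a * z ≠ 0) :
    deriv (fun z => c * (z * ((z - a) / (1 - (starRingEnd ℂ) a * z)))) z
      = c * ((2*z - (starRingEnd ℂ) a * z^2 - a) / (1 - (starRingEnd ℂ) a * z)^2) := by
  set b := (starRingEnd ℂ) a with hb
  have h1 : HasDerivAt (fun z : ℂ => z - a) 1 z := (hasDerivAt_id z).sub_const a
  have h2 : HasDerivAt (fun z : ℂ => 1 - b * z) (-b) z := by
    simpa using ((hasDerivAt_id z).const_mul b).const_sub 1
  have h3 := h1.div h2 h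
  have h4 := ((hasDerivAt_id z).mul h3).const_mul c
  have h5 : deriv (fun z => c * (z * ((z - a) / (1 - b * z)))) z
      = c * (1 * ((z - a) / (1 - b * z)) + z * ((1 * (1 - b * z) - (z - a) * (-b)) / (1 - b * z) ^ 2)) := by
    exact h4.deriv
  rw [h5]
  field_simp
  ring

private lemma norm_two_sub (a ζ : ℂ) (ha : ‖a‖ < 1) (hζ : ‖ζ‖ < 1) :
    1 < ‖2 - (starRingEnd ℂ) a * ζ‖ := by
  have h := norm_conj_mul_lt a ζ ha hζ
  have h2 : ‖(2:ℂ)‖ - ‖(starRingEnd ℂ) a * ζ‖ ≤ ‖2 - (starRingEnd ℂ) a * ζ‖ :=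
    norm_sub_norm_le _ _
  have h3 : ‖(2:ℂ)‖ = 2 := by norm_num
  linarith

private lemma ratio_norm (c a ζ : ℂ) (hc : c ≠ 0) (ha0 : 0 < ‖a‖) (ha1 : ‖a‖ < 1)
    (hζ1 : ‖ζ‖ < 1)
    (heq : 2*ζ - (starRingEnd ℂ) a * ζ^2 - a = 0) :
    ‖(fun z => c * (z * ((z - a) / (1 - (starRingEnd ℂ) a * z)))) ζ /
      (ζ * deriv (fun z => c * (z * ((z - a) / (1 - (starRingEnd ℂ) a * z)))) 0)‖
      = ‖2 - (starRingEnd ℂ) a * ζ‖⁻¹ := by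
  have hden := one_sub_ne a ζ ha1 hζ1
  have ha : a ≠ 0 := by
    intro h; rw [h, norm_zero] at ha0; exact lt_irrefl 0 ha0
  have hζ0 : ζ ≠ 0 := by
    intro h; apply ha; rw [h] at heq; linear_combination -heq
  have htwo : (2 - (starRingEnd ℂ) a * ζ) ≠ 0 := by
    intro h
    have := norm_two_sub a ζ ha1 hζ1
    rw [h, norm_zero] at this; linarith
  have hd0 : deriv (fun z => c * (z * ((z - a) / (1 - (starRingEnd ℂ) a * z)))) 0
      = -(c * a) := by
    rw [deriv_formula c a 0 (by simp)]
    simp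
  rw [hd0]
  rw [← norm_inv]
  congr 1
  beta_reduce
  field_simp
  rw [neg_div', div_eq_div_iff (by rwa [mul_comm]) (by rwa [mul_comm])]
  linear_combination (-1 : ℂ) * heq

/-- `K_2 = 1` and the supremum is not attained: every degree-2 Blaschke product
with `B(0) = 0`, `B'(0) ≠ 0` satisfies `|B(ζ)/(ζ B'(0))| < 1` at its critical point
`ζ ∈ D`, yet the supremum of these quantities equals `1`. -/
theorem K_two_eq_one :
    (∀ (α : ℝ) (a : ℂ), 0 < ‖a‖ → ‖a‖ < 1 →
      ∀ B : ℂ → ℂ,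
        B = (fun z => Complex.exp (α * Complex.I) *
          (z * ((z - a) / (1 - (starRingEnd ℂ) a * z)))) →
        ∀ ζ : ℂ, ‖ζ‖ < 1 → deriv B ζ = 0 →
          ‖B ζ / (ζ * deriv B 0)‖ < 1) ∧
    (∀ ε : ℝ, 0 < ε →
      ∃ (α : ℝ) (a : ℂ) (B : ℂ → ℂ) (ζ : ℂ),
        0 < ‖a‖ ∧ ‖a‖ < 1 ∧
        B = (fun z => Complex.exp (α * Complex.I) *
          (z * ((z - a) / (1 - (starRingEnd ℂ) a * z)))) ∧
        ‖ζ‖ < 1 ∧ deriv B ζ = 0 ∧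
        1 - ε < ‖B ζ / (ζ * deriv B 0)‖) := by
  constructor
  · intro α a ha0 ha1 B hB ζ hζ1 hcrit
    have hc : Complex.exp (α * Complex.I) ≠ 0 := Complex.exp_ne_zero _
    have hden := one_sub_ne a ζ ha1 hζ1
    rw [hB, deriv_formula _ a ζ hden] at hcrit
    have h6 := (mul_eq_zero.mp hcrit).resolve_left hc
    have heq := (div_eq_zero_iff.mp h6).resolve_right (pow_ne_zero 2 hden)
    rw [hB, ratio_norm _ a ζ hc ha0 ha1 hζ1 heq]
    exact inv_lt_one_of_one_lt₀ (norm_two_sub a ζ ha1 hζ1)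
  · intro ε hε
    set s : ℝ := min ε 1 / 2 with hs
    have hs0 : 0 < s := by positivity
    have hs1 : s < 1 := by
      have : min ε 1 ≤ 1 := min_le_right _ _
      rw [hs]; linarith
    set r : ℝ := Real.sqrt (1 - s ^ 2) with hrdef
    have hr2 : r ^ 2 = 1 - s ^ 2 := Real.sq_sqrt (by nlinarith)
    have hr0 : 0 < r := Real.sqrt_pos.mpr (by nlinarith)
    have hr1 : r < 1 := by nlinarith
    set ζ : ℂ := (((1 - s) / r : ℝ) : ℂ) with hζdef
    have hrC : ((r : ℝ) : ℂ) ≠ 0 := Complex.ofReal_ne_zero.mpr hr0.ne'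
    have hr2C : ((r : ℝ) : ℂ) ^ 2 = 1 - (s : ℂ) ^ 2 := by
      have := congrArg (fun x : ℝ => (x : ℂ)) hr2
      push_cast at this
      exact this
    have ha0 : 0 < ‖((r : ℝ) : ℂ)‖ := by
      rw [Complex.norm_real, Real.norm_eq_abs, abs_of_pos hr0]; exact hr0
    have ha1 : ‖((r : ℝ) : ℂ)‖ < 1 := by
      rw [Complex.norm_real, Real.norm_eq_abs, abs_of_pos hr0]; exact hr1
    have hζ1 : ‖ζ‖ < 1 := by
      rw [hζdef, Complex.norm_real, Real.norm_eq_abs,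
        abs_of_pos (div_pos (by linarith) hr0), div_lt_one hr0]
      nlinarith
    have heq : 2 * ζ - (starRingEnd ℂ) ((r : ℝ) : ℂ) * ζ ^ 2 - ((r : ℝ) : ℂ) = 0 := by
      rw [Complex.conj_ofReal, hζdef]
      push_cast
      field_simp
      linear_combination (-1 : ℂ) * hr2C
    have hc : Complex.exp ((0 : ℝ) * Complex.I) ≠ 0 := Complex.exp_ne_zero _
    have hden := one_sub_ne ((r : ℝ) : ℂ) ζ ha1 hζ1
    refine ⟨0, ((r : ℝ) : ℂ),
      (fun z => Complex.exp ((0:ℝ) * Complex.I) *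
        (z * ((z - ((r : ℝ) : ℂ)) / (1 - (starRingEnd ℂ) ((r : ℝ) : ℂ) * z)))), ζ,
      ha0, ha1, rfl, hζ1, ?_, ?_⟩
    · rw [deriv_formula _ _ _ hden, heq]
      simp
    · rw [ratio_norm _ _ _ hc ha0 ha1 hζ1 heq]
      have h2 : (2 : ℂ) - (starRingEnd ℂ) ((r : ℝ) : ℂ) * ζ = ((1 + s : ℝ) : ℂ) := by
        rw [Complex.conj_ofReal, hζdef]
        push_cast
        field_simp
        ring
      rw [h2, Complex.norm_real, Real.norm_eq_abs, abs_of_pos (by linarith : (0:ℝ) < 1 + s)]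
      have h1s : (0:ℝ) < 1 + s := by linarith
      rcases le_or_gt 1 ε with h | h
      · have : (0:ℝ) < (1 + s)⁻¹ := by positivity
        linarith
      · have hs' : s = ε / 2 := by rw [hs, min_eq_left h.le]
        rw [show (1 + s)⁻¹ = 1 / (1 + s) by ring, lt_div_iff₀ h1s]
        nlinarith [mul_pos hε hε]
end

section
/- For every n ≥ 2 and every ε > 0, there exists a finite Blaschke product B of degree n with B(0) = 0 and B'(0) ≠ 0 such that max{|B(ζ)/(ζ B'(0))| : B'(ζ) = 0, ζ ∈ D} < 1/n + ε. Consequently L_n ≤ 1/n. -/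
open Complex Finset

lemma one_sub_ne_zero_of_norm_lt {x : ℂ} (h : ‖x‖ < 1) : (1 : ℂ) - x ≠ 0 := by
  intro he
  rw [sub_eq_zero] at he
  rw [← he] at h
  simp at h

lemma one_add_ne_zero_of_norm_lt {x : ℂ} (h : ‖x‖ < 1) : (1 : ℂ) + x ≠ 0 := by
  have := one_sub_ne_zero_of_norm_lt (x := -x) (by simpa using h)
  simpa [sub_neg_eq_add] using this

lemma prod_range_root (n : ℕ) (hn : 0 < n) {ω : ℂ} (hω : IsPrimitiveRoot ω n)
    (x y : ℂ) : ∏ i ∈ range n, (x - ω ^ i * y) = x ^ n - y ^ n := by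
  have : NeZero n := ⟨hn.ne'⟩
  rw [hω.pow_sub_pow_eq_prod_sub_mul x y hn]
  refine Finset.prod_nbij (fun i => ω ^ i) ?_ ?_ ?_ (fun _ _ => rfl)
  · intro i _
    rw [Polynomial.mem_nthRootsFinset hn, ← pow_mul, mul_comm i n, pow_mul, hω.pow_eq_one,
      one_pow]
  · intro i hi j hj hij
    exact hω.pow_inj (mem_range.mp hi) (mem_range.mp hj) hij
  · intro ξ hξ
    obtain ⟨i, hi, hie⟩ := hω.eq_pow_of_pow_eq_one ((Polynomial.mem_nthRootsFinset hn 1).mp hξ)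
    exact ⟨i, by simpa using hi, hie⟩

set_option maxHeartbeats 2000000 in
/-- `L_n ≤ 1/n`: for every `ε > 0` there is a finite Blaschke product `B` of degree
`n` with `B(0) = 0`, `B'(0) ≠ 0`, whose critical points `ζ` in the unit disk all
satisfy `|B(ζ)/(ζ B'(0))| < 1/n + ε`. -/
theorem L_n_le_inv_n (n : ℕ) (hn : 2 ≤ n) (ε : ℝ) (hε : 0 < ε) :
    ∃ (z : Fin (n - 1) → ℂ) (B : ℂ → ℂ),
      (∀ k, ‖z k‖ < 1) ∧
      B = (fun w => w * ∏ k, (w - z k) / (1 - (starRingEnd ℂ) (z k) * w)) ∧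
      deriv B 0 ≠ 0 ∧
      (∃ ζ : ℂ, ‖ζ‖ < 1 ∧ deriv B ζ = 0) ∧
      ∀ ζ : ℂ, ‖ζ‖ < 1 → deriv B ζ = 0 →
        ‖B ζ / (ζ * deriv B 0)‖ < 1 / n + ε := by
  obtain ⟨m, rfl⟩ : ∃ m, n = m + 2 := ⟨n - 2, by omega⟩
  suffices h : ∃ (z : Fin (m+1) → ℂ) (B : ℂ → ℂ),
      (∀ k, ‖z k‖ < 1) ∧
      B = (fun w => w * ∏ k, (w - z k) / (1 - (starRingEnd ℂ) (z k) * w)) ∧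
      deriv B 0 ≠ 0 ∧
      (∃ ζ : ℂ, ‖ζ‖ < 1 ∧ deriv B ζ = 0) ∧
      (∀ ζ : ℂ, ‖ζ‖ < 1 → deriv B ζ = 0 →
        ‖B ζ / (ζ * deriv B 0)‖ < 1 / (m+2:ℕ) + ε) by exact h
  -- the small parameter a
  set a : ℝ := min (1/3) (Real.sqrt ε / 2) with ha_def
  have ha0 : 0 < a := lt_min (by norm_num) (by positivity)
  have ha3 : a ≤ 1/3 := min_le_left _ _
  have ha1 : a < 1 := lt_of_le_of_lt ha3 (by norm_num)
  have haε : a^2 ≤ ε/4 := by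
    have h1 : a ≤ Real.sqrt ε / 2 := min_le_right _ _
    have h2 : (Real.sqrt ε / 2)^2 = ε / 4 := by
      rw [div_pow, Real.sq_sqrt hε.le]; norm_num
    nlinarith [Real.sqrt_nonneg ε]
  have ha2 : a^2 ≤ 1/9 := by nlinarith
  have hna : ‖(a:ℂ)‖ = a := by
    rw [Complex.norm_real]; exact abs_of_pos ha0
  -- the primitive root
  set ω : ℂ := Complex.exp (2 * Real.pi * I / (m+2 : ℕ)) with hω_def
  have hω : IsPrimitiveRoot ω (m+2) := Complex.isPrimitiveRoot_exp (m+2) (by omega)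
  have hωpow : ω ^ (m+2) = 1 := hω.pow_eq_one
  have hω1 : ‖ω‖ = 1 := by
    have h : ‖ω‖ ^ (m+2) = 1 := by rw [← norm_pow, hωpow, norm_one]
    rcases lt_trichotomy ‖ω‖ 1 with hl | he | hg
    · exfalso
      have := pow_lt_one₀ (n := m+2) (norm_nonneg ω) hl (by omega)
      rw [h] at this; exact lt_irrefl _ this
    · exact he
    · exfalso
      have := one_lt_pow₀ (n := m+2) hg (by omega)
      rw [h] at this; exact lt_irrefl _ this
  have hωne : ω ≠ 0 := fun h => by simp [h] at hω1
  have hωconj : ω * (starRingEnd ℂ) ω = 1 := by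
    rw [Complex.mul_conj, Complex.normSq_eq_norm_sq, hω1]
    norm_num
  -- denominators c i
  set c : ℕ → ℂ := fun i => 1 - (a:ℂ)^2 * ω^i with hc_def
  have hnc : ∀ i, ‖(a:ℂ)^2 * ω^i‖ = a^2 := by
    intro i
    rw [norm_mul, norm_pow, norm_pow, hna, hω1, one_pow, mul_one]
  have hca : ∀ i, ‖(a:ℂ)^2 * ω^i‖ < 1 := fun i => by rw [hnc i]; nlinarith
  have hc : ∀ i, c i ≠ 0 := fun i => one_sub_ne_zero_of_norm_lt (hca i)
  have hclb : ∀ i, 1 - a^2 ≤ ‖c i‖ := by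
    intro i
    have h := norm_sub_norm_le (1 : ℂ) ((a:ℂ)^2 * ω^i)
    rw [norm_one, hnc i] at h
    simpa [hc_def] using h
  -- the zeros
  set zz : ℕ → ℂ := fun i => (a:ℂ) * (ω^i - 1) / c i with hzz_def
  have hzzb : ∀ i, ‖zz i‖ ≤ 3/4 := by
    intro i
    rw [hzz_def]
    simp only [norm_div, norm_mul, hna]
    have hnum : ‖ω^i - 1‖ ≤ 2 := by
      have := norm_sub_le (ω^i) 1
      rw [norm_pow, hω1, one_pow, norm_one] at this
      linarith
    have hden : (8:ℝ)/9 ≤ ‖c i‖ := le_trans (by nlinarith) (hclb i)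
    have hcpos : (0:ℝ) < ‖c i‖ := lt_of_lt_of_le (by norm_num) hden
    rw [div_le_iff₀ hcpos]
    nlinarith [norm_nonneg (ω^i - 1)]
  set z : Fin (m+1) → ℂ := fun k => zz ((k:ℕ)+1) with hz_def
  -- numerator and denominator rational functions
  set A : ℂ := (a:ℂ)^(m+2) with hA_def
  set N : ℂ → ℂ := fun w => (w + a)^(m+2) - A * (1 + a*w)^(m+2) with hN_def
  set D : ℂ → ℂ := fun w => (1 + a*w)^(m+2) - A * (w + a)^(m+2) with hD_def
  set d : ℂ → ℕ → ℂ := fun w i => c i + (a:ℂ)*(1-ω^i)*w with hd_def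
  set F : ℂ → ℂ := fun w => w * ∏ k : Fin (m+1), (w - z k) / (1 - (starRingEnd ℂ) (z k) * w)
    with hF_def
  have h1a2 : ((1:ℂ) - (a:ℂ)^2) ≠ 0 := by
    apply one_sub_ne_zero_of_norm_lt
    rw [norm_pow, hna]; nlinarith
  -- factorization of N
  have hNfact : ∀ w : ℂ,
      N w = ((1:ℂ) - (a:ℂ)^2) * w * ∏ j ∈ range (m+1), (c (j+1) * (w - zz (j+1))) := by
    intro w
    have h1 : ∏ i ∈ range (m+2), ((w + (a:ℂ)) - ω ^ i * ((a:ℂ) * (1 + (a:ℂ)*w)))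
        = (w + (a:ℂ))^(m+2) - ((a:ℂ) * (1 + (a:ℂ)*w))^(m+2) :=
      prod_range_root (m+2) (by omega) hω _ _
    rw [Finset.prod_range_succ'] at h1
    have h0 : (w + (a:ℂ)) - ω ^ 0 * ((a:ℂ) * (1 + (a:ℂ)*w)) = ((1:ℂ) - (a:ℂ)^2) * w := by
      rw [pow_zero]; ring
    have hterm : ∀ j ∈ range (m+1), (w + (a:ℂ)) - ω ^ (j+1) * ((a:ℂ) * (1 + (a:ℂ)*w))
        = c (j+1) * (w - zz (j+1)) := by
      intro j _
      have hcj : (1:ℂ) - (a:ℂ)^2 * ω^(j+1) ≠ 0 := by simpa [hc_def] using hc (j+1)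
      simp only [hzz_def, hc_def]
      field_simp
      ring
    simp only [hN_def, hA_def]
    rw [← mul_pow, ← h1, h0, Finset.prod_congr rfl hterm]
    ring
  -- factorization of D
  have hDfact : ∀ w : ℂ, D w = ((1:ℂ) - (a:ℂ)^2) * ∏ j ∈ range (m+1), d w (j+1) := by
    intro w
    have h1 : ∏ i ∈ range (m+2), ((1 + (a:ℂ)*w) - ω ^ i * ((a:ℂ) * (w + (a:ℂ))))
        = (1 + (a:ℂ)*w)^(m+2) - ((a:ℂ) * (w + (a:ℂ)))^(m+2) :=
      prod_range_root (m+2) (by omega) hω _ _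
    rw [Finset.prod_range_succ'] at h1
    have h0 : (1 + (a:ℂ)*w) - ω ^ 0 * ((a:ℂ) * (w + (a:ℂ))) = (1:ℂ) - (a:ℂ)^2 := by
      rw [pow_zero]; ring
    have hterm : ∀ j ∈ range (m+1), (1 + (a:ℂ)*w) - ω ^ (j+1) * ((a:ℂ) * (w + (a:ℂ)))
        = d w (j+1) := by
      intro j _
      simp only [hd_def, hc_def]
      ring
    simp only [hD_def, hA_def]
    rw [← mul_pow, ← h1, h0, Finset.prod_congr rfl hterm]
    ring
  -- conjugation of the zeros
  have hωrev : ∀ j, j < m+1 → (starRingEnd ℂ) ω ^ (j+1) = ω ^ (m+1-j) := by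
    intro j hj
    have hpow : ω ^ (j+1) ≠ 0 := pow_ne_zero _ hωne
    have h1 : (starRingEnd ℂ) ω ^ (j+1) * ω ^ (j+1) = 1 := by
      rw [← mul_pow, mul_comm, hωconj, one_pow]
    have h2 : ω ^ (m+1-j) * ω ^ (j+1) = 1 := by
      rw [← pow_add, show m+1-j + (j+1) = m+2 by omega, hωpow]
    exact mul_right_cancel₀ hpow (h1.trans h2.symm)
  have hconj : ∀ j, j < m+1 → (starRingEnd ℂ) (zz (j+1)) = zz (m+1-j) := by
    intro j hj
    simp only [hzz_def, hc_def, map_div₀, map_mul, map_sub, map_one, map_pow,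
      Complex.conj_ofReal]
    rw [hωrev j hj]
  -- nonvanishing of the d factors
  have hwd : ∀ (w : ℂ), ‖w‖ < 1 → ∀ i, d w i ≠ 0 := by
    intro w hw i
    simp only [hd_def]
    intro he
    have h2 : ‖1 - ω^i‖ ≤ 2 := by
      have := norm_sub_le (1:ℂ) (ω^i)
      rw [norm_one, norm_pow, hω1, one_pow] at this
      linarith
    have h1 : ‖(a:ℂ)*(1-ω^i)*w‖ ≤ 2*a := by
      rw [norm_mul, norm_mul, hna]
      have hxy : ‖1 - ω^i‖ * ‖w‖ ≤ 2 * 1 :=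
        mul_le_mul h2 hw.le (norm_nonneg w) (by norm_num)
      nlinarith [ha0.le]
    have h3 : ‖c i‖ ≤ 2*a := by
      have hmm : c i = -((a:ℂ)*(1-ω^i)*w) := by linear_combination he
      rw [hmm, norm_neg]; exact h1
    have := hclb i
    nlinarith
  -- nonvanishing of Blaschke denominators
  have honez : ∀ (w : ℂ), ‖w‖ < 1 → ∀ i, (1:ℂ) - (starRingEnd ℂ) (zz i) * w ≠ 0 := by
    intro w hw i
    apply one_sub_ne_zero_of_norm_lt
    rw [norm_mul, RCLike.norm_conj]
    nlinarith [hzzb i, norm_nonneg (zz i), norm_nonneg w]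
  -- denominator product
  have hprodden : ∀ w : ℂ, ∏ j ∈ range (m+1), ((1:ℂ) - (starRingEnd ℂ) (zz (j+1)) * w)
      = (∏ j ∈ range (m+1), d w (j+1)) / (∏ j ∈ range (m+1), c (j+1)) := by
    intro w
    have hstep : ∀ j ∈ range (m+1), (1:ℂ) - (starRingEnd ℂ) (zz (j+1)) * w
        = d w (m+1-j) / c (m+1-j) := by
      intro j hj
      have hj' := mem_range.mp hj
      rw [hconj j hj', eq_div_iff (hc (m+1-j))]
      have hci : (1:ℂ) - (a:ℂ)^2 * ω^(m+1-j) ≠ 0 := by simpa [hc_def] using hc (m+1-j)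
      simp only [hzz_def, hd_def, hc_def]
      field_simp
      ring
    rw [Finset.prod_congr rfl hstep]
    rw [← Finset.prod_div_distrib]
    rw [← Finset.prod_range_reflect (fun j => d w (j+1) / c (j+1)) (m+1)]
    refine Finset.prod_congr rfl ?_
    intro j hj
    have hj' := mem_range.mp hj
    rw [show m + 1 - 1 - j + 1 = m + 1 - j by omega]
  -- the global identity B = N/D on the disk
  have hBND : ∀ w : ℂ, ‖w‖ < 1 → F w = N w / D w := by
    intro w hw
    have hfin : ∏ k : Fin (m+1), (w - z k) / (1 - (starRingEnd ℂ) (z k) * w)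
        = ∏ j ∈ range (m+1), ((w - zz (j+1)) / (1 - (starRingEnd ℂ) (zz (j+1)) * w)) := by
      rw [hz_def]
      exact Fin.prod_univ_eq_prod_range
        (fun j => (w - zz (j+1)) / (1 - (starRingEnd ℂ) (zz (j+1)) * w)) (m+1)
    have hPc : ∏ j ∈ range (m+1), c (j+1) ≠ 0 :=
      Finset.prod_ne_zero_iff.mpr (fun j _ => hc _)
    have hPd : ∏ j ∈ range (m+1), d w (j+1) ≠ 0 :=
      Finset.prod_ne_zero_iff.mpr (fun j _ => hwd w hw _)
    rw [hF_def]
    simp only []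
    rw [hfin, Finset.prod_div_distrib, hprodden w, hNfact w, hDfact w,
      Finset.prod_mul_distrib]
    field_simp
  -- D is nonvanishing on the disk
  have hDne : ∀ w : ℂ, ‖w‖ < 1 → D w ≠ 0 := by
    intro w hw
    simp only [hD_def, hA_def]
    intro he
    have h1 : ‖(a:ℂ)*(w+(a:ℂ))‖ < ‖1 + (a:ℂ)*w‖ := by
      have hub : ‖(a:ℂ)*(w+(a:ℂ))‖ ≤ a*(‖w‖+a) := by
        rw [norm_mul, hna]
        have h := norm_add_le w ((a:ℂ))
        rw [hna] at h
        nlinarith [ha0.le, norm_nonneg (w + (a:ℂ))]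
      have hlb : 1 - a*‖w‖ ≤ ‖1 + (a:ℂ)*w‖ := by
        have h := norm_add_le (1 + (a:ℂ)*w) (-((a:ℂ)*w))
        simp only [add_neg_cancel_right, norm_one, norm_neg] at h
        rw [norm_mul, hna] at h
        linarith
      nlinarith [norm_nonneg w]
    have h2 : ‖((a:ℂ)*(w+(a:ℂ)))^(m+2)‖ < ‖(1 + (a:ℂ)*w)^(m+2)‖ := by
      rw [norm_pow, norm_pow]
      exact pow_lt_pow_left₀ h1 (norm_nonneg _) (by omega)
    rw [sub_eq_zero, ← mul_pow] at he
    rw [he] at h2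
    exact lt_irrefl _ h2
  have hQne : ∀ w : ℂ, ‖w‖ < 1 → (1 + (a:ℂ)*w) ≠ 0 := by
    intro w hw
    apply one_add_ne_zero_of_norm_lt
    rw [norm_mul, hna]
    nlinarith [norm_nonneg w]
  -- derivative formula
  have hderiv : ∀ ζ : ℂ, ‖ζ‖ < 1 →
      deriv F ζ = ((m+2:ℕ):ℂ) * (1 - A^2) * (1 - (a:ℂ)^2) * (ζ+(a:ℂ))^(m+1)
        * (1+(a:ℂ)*ζ)^(m+1) / (D ζ)^2 := by
    intro ζ hζ
    have hev : F =ᶠ[nhds ζ] fun w => N w / D w := by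
      filter_upwards [Metric.isOpen_ball.mem_nhds
        (show ζ ∈ Metric.ball (0:ℂ) 1 from mem_ball_zero_iff.mpr hζ)] with w hw
      exact hBND w (mem_ball_zero_iff.mp hw)
    rw [hev.deriv_eq]
    have hP : HasDerivAt (fun w : ℂ => (w + (a:ℂ))^(m+2))
        (((m+2:ℕ):ℂ) * (ζ+(a:ℂ))^(m+1) * 1) ζ :=
      ((hasDerivAt_id ζ).add_const ((a:ℂ))).pow (m+2)
    have hQ : HasDerivAt (fun w : ℂ => (1 + (a:ℂ)*w)^(m+2))
        (((m+2:ℕ):ℂ) * (1+(a:ℂ)*ζ)^(m+1) * ((a:ℂ)*1)) ζ :=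
      (((hasDerivAt_id ζ).const_mul ((a:ℂ))).const_add 1).pow (m+2)
    have hNd : HasDerivAt N (((m+2:ℕ):ℂ) * (ζ+(a:ℂ))^(m+1) * 1
        - A * (((m+2:ℕ):ℂ) * (1+(a:ℂ)*ζ)^(m+1) * ((a:ℂ)*1))) ζ := by
      rw [hN_def]
      exact hP.sub (hQ.const_mul A)
    have hDd : HasDerivAt D (((m+2:ℕ):ℂ) * (1+(a:ℂ)*ζ)^(m+1) * ((a:ℂ)*1)
        - A * (((m+2:ℕ):ℂ) * (ζ+(a:ℂ))^(m+1) * 1)) ζ := by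
      rw [hD_def]
      exact hQ.sub (hP.const_mul A)
    rw [show (fun w => N w / D w) = N / D from rfl, (hNd.div hDd (hDne ζ hζ)).deriv]
    congr 1
    simp only [hN_def, hD_def, hA_def]
    ring
  -- nonvanishing constants
  have h1A : ((1:ℂ) - A^2) ≠ 0 := by
    apply one_sub_ne_zero_of_norm_lt
    rw [norm_pow, hA_def, norm_pow, hna]
    have hlt : a^(m+2) < 1 := pow_lt_one₀ ha0.le ha1 (by omega)
    nlinarith [pow_nonneg ha0.le (m+2)]
  have hm2 : ((m+2:ℕ):ℂ) ≠ 0 := Nat.cast_ne_zero.mpr (by omega)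
  have haC : ((a:ℂ)) ≠ 0 := by
    simpa using Complex.ofReal_ne_zero.mpr ha0.ne'
  -- derivative at 0
  have hD0 : D 0 = 1 - A^2 := by
    simp only [hD_def, hA_def, mul_zero, add_zero, zero_add, one_pow]
    ring
  have hd0 : deriv F 0 = ((m+2:ℕ):ℂ) * (1 - (a:ℂ)^2) * (a:ℂ)^(m+1) / (1 - A^2) := by
    rw [hderiv 0 (by simp), hD0]
    simp only [zero_add, mul_zero, add_zero, one_pow, mul_one]
    field_simp
  have hd0ne : deriv F 0 ≠ 0 := by
    rw [hd0]
    exact div_ne_zero (mul_ne_zero (mul_ne_zero hm2 h1a2) (pow_ne_zero _ haC)) h1A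
  -- critical points are exactly -a
  have hcrit : ∀ ζ : ℂ, ‖ζ‖ < 1 → (deriv F ζ = 0 ↔ ζ = -(a:ℂ)) := by
    intro ζ hζ
    rw [hderiv ζ hζ]
    constructor
    · intro h
      rcases div_eq_zero_iff.mp h with h | h
      · rw [mul_eq_zero, mul_eq_zero, mul_eq_zero, mul_eq_zero] at h
        rcases h with ((((h|h)|h)|h)|h)
        · exact absurd h hm2
        · exact absurd h h1A
        · exact absurd h h1a2
        · have hz0 := pow_eq_zero_iff (n := m+1) (by omega) |>.mp h
          exact eq_neg_of_add_eq_zero_left hz0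
        · exact absurd h (pow_ne_zero _ (hQne ζ hζ))
      · exact absurd h (pow_ne_zero 2 (hDne ζ hζ))
    · intro h
      rw [h, show (-(a:ℂ) + (a:ℂ)) = 0 by ring, zero_pow (show m+1 ≠ 0 by omega)]
      simp
  have hma : ‖-(a:ℂ)‖ < 1 := by rw [norm_neg, hna]; exact ha1
  -- value at the critical point
  have hBa : F (-(a:ℂ)) = -A := by
    rw [hBND _ hma]
    have hNa : N (-(a:ℂ)) = -A * ((1:ℂ) - (a:ℂ)^2)^(m+2) := by
      simp only [hN_def]
      rw [show (-(a:ℂ) + (a:ℂ)) = 0 by ring, zero_pow (show m+2 ≠ 0 by omega),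
        show ((1:ℂ) + (a:ℂ)*(-(a:ℂ))) = 1 - (a:ℂ)^2 by ring]
      ring
    have hDa : D (-(a:ℂ)) = ((1:ℂ) - (a:ℂ)^2)^(m+2) := by
      simp only [hD_def]
      rw [show (-(a:ℂ) + (a:ℂ)) = 0 by ring, zero_pow (show m+2 ≠ 0 by omega),
        show ((1:ℂ) + (a:ℂ)*(-(a:ℂ))) = 1 - (a:ℂ)^2 by ring]
      ring
    rw [hNa, hDa]
    have hpne : ((1:ℂ) - (a:ℂ)^2)^(m+2) ≠ 0 := pow_ne_zero _ h1a2
    field_simp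
  -- assemble
  have hzlt : ∀ k : Fin (m+1), ‖z k‖ < 1 := by
    intro k
    have hk : ‖zz ((k:ℕ)+1)‖ < 1 := lt_of_le_of_lt (hzzb _) (by norm_num)
    simpa [hz_def] using hk
  refine ⟨z, F, hzlt, hF_def, hd0ne, ⟨-(a:ℂ), hma, (hcrit _ hma).mpr rfl⟩, ?_⟩
  intro ζ hζ hcζ
  have hζa : ζ = -(a:ℂ) := (hcrit ζ hζ).mp hcζ
  rw [hζa, hBa, hd0]
  have h1a2r : (1:ℝ) - a^2 ≠ 0 := by nlinarith
  have h1A' : (1:ℂ) - (a:ℂ)^(2*m+4) ≠ 0 := by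
    have h := h1A
    rw [hA_def, ← pow_mul, show (m+2)*2 = 2*m+4 by ring] at h
    exact h
  have hm2c : ((m:ℂ) + 2) ≠ 0 := by
    have h := hm2
    push_cast at h
    exact h
  have hpowne : ((a:ℂ))^m ≠ 0 := pow_ne_zero _ haC
  have hval : (-A) / ((-(a:ℂ)) * (((m+2:ℕ):ℂ) * (1 - (a:ℂ)^2) * (a:ℂ)^(m+1) / (1 - A^2)))
      = (((1 - a^(2*m+4)) / (((m+2:ℕ):ℝ) * (1 - a^2)) : ℝ) : ℂ) := by
    rw [hA_def]
    push_cast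
    field_simp [haC, hm2c, h1a2, h1A', hpowne]
    ring
  rw [hval, Complex.norm_real, Real.norm_eq_abs]
  have hple : a^(2*m+4) ≤ 1 := pow_le_one₀ ha0.le ha1.le
  have hm2R : (0:ℝ) < ((m+2:ℕ):ℝ) := by positivity
  have hposden : (0:ℝ) < ((m+2:ℕ):ℝ) * (1 - a^2) := by nlinarith
  have hr0 : (0:ℝ) ≤ (1 - a^(2*m+4)) / (((m+2:ℕ):ℝ) * (1 - a^2)) :=
    div_nonneg (by linarith) hposden.le
  rw [_root_.abs_of_nonneg hr0]
  have hfin : (1 - a^(2*m+4)) / (((m+2:ℕ):ℝ) * (1 - a^2)) ≤ 1/((m+2:ℕ):ℝ) + a^2 := by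
    rw [div_le_iff₀ hposden]
    have hcast : (2:ℝ) ≤ ((m+2:ℕ):ℝ) := by
      have h22 : ((2:ℕ):ℝ) ≤ ((m+2:ℕ):ℝ) := Nat.cast_le.mpr (by omega)
      simpa using h22
    have h89 : (8:ℝ)/9 ≤ 1 - a^2 := by linarith
    have hM1 : (2:ℝ)*(8/9) ≤ ((m+2:ℕ):ℝ) * (1-a^2) :=
      mul_le_mul hcast h89 (by norm_num) (by positivity)
    have key : a^2*1 ≤ a^2*(((m+2:ℕ):ℝ)*(1-a^2)) :=
      mul_le_mul_of_nonneg_left (by linarith) (sq_nonneg a)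
    have hexp : (1/((m+2:ℕ):ℝ) + a^2) * (((m+2:ℕ):ℝ)*(1-a^2))
        = (1-a^2) + a^2*(((m+2:ℕ):ℝ)*(1-a^2)) := by
      field_simp
    rw [hexp]
    linarith [pow_nonneg ha0.le (2*m+4)]
  have hεa : a^2 < ε := by nlinarith
  calc (1 - a^(2*m+4)) / (((m+2:ℕ):ℝ) * (1 - a^2)) ≤ 1/((m+2:ℕ):ℝ) + a^2 := hfin
    _ < 1/((m+2:ℕ):ℝ) + ε := by linarith
end

section
/- Let B be a finite Blaschke product of degree n with B(0) = 0, B'(0) ≠ 0, and suppose r = min over critical points ζ_i in D of |B(ζ_i)| satisfies r ≥ 1/2. Then there exists a critical point ζ_l of B in D with |B(ζ_l)/(ζ_l B'(0))| ≥ 1/2^n. -/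
open Complex

open Finset in
section
noncomputable def ff {m : ℕ} (z : Fin m → ℂ) (k : Fin m) (w : ℂ) : ℂ :=
  (w - z k) / (1 - (starRingEnd ℂ) (z k) * w)

noncomputable def dd {m : ℕ} (z : Fin m → ℂ) (k : Fin m) (w : ℂ) : ℂ :=
  (1 - (starRingEnd ℂ) (z k) * z k) / (1 - (starRingEnd ℂ) (z k) * w) ^ 2

noncomputable def GG {m : ℕ} (z : Fin m → ℂ) (w : ℂ) : ℂ :=
  (∏ k, ff z k w) + w * ∑ k, (∏ j ∈ Finset.univ.erase k, ff z j w) • dd z k w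

lemma hasDerivAt_ff {m : ℕ} (z : Fin m → ℂ) (k : Fin m) (w : ℂ)
    (h : 1 - (starRingEnd ℂ) (z k) * w ≠ 0) :
    HasDerivAt (ff z k) (dd z k w) w := by
  have h1 : HasDerivAt (fun w : ℂ => w - z k) 1 w := by
    simpa using (hasDerivAt_id w).sub_const (z k)
  have h2 : HasDerivAt (fun w : ℂ => 1 - (starRingEnd ℂ) (z k) * w)
      (-(starRingEnd ℂ) (z k)) w := by
    simpa using ((hasDerivAt_id w).const_mul ((starRingEnd ℂ) (z k))).const_sub 1
  have := h1.div h2 h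
  refine this.congr_deriv ?_
  unfold dd
  field_simp
  ring

lemma hasDerivAt_BB {m : ℕ} (z : Fin m → ℂ) (w : ℂ)
    (h : ∀ k, 1 - (starRingEnd ℂ) (z k) * w ≠ 0) :
    HasDerivAt (fun w => w * ∏ k, (w - z k) / (1 - (starRingEnd ℂ) (z k) * w)) (GG z w) w := by
  have hP : HasDerivAt (fun w => ∏ k, ff z k w)
      (∑ k, (∏ j ∈ Finset.univ.erase k, ff z j w) • dd z k w) w := by
    simpa using HasDerivAt.fun_finsetProd (u := Finset.univ)
      (f := fun k => ff z k) (f' := fun k => dd z k w)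
      (fun k _ => hasDerivAt_ff z k w (h k))
  have := (hasDerivAt_id w).mul hP
  simp only [one_mul, id] at this
  exact this

lemma GG_zero {m : ℕ} (z : Fin m → ℂ) : GG z 0 = ∏ k, -z k := by
  unfold GG ff
  simp

lemma norm_GG_sphere {m : ℕ} (z : Fin m → ℂ) (hz : ∀ k, ‖z k‖ < 1) (w : ℂ) (hw : ‖w‖ = 1) :
    1 ≤ ‖GG z w‖ := by
  have hw1 : w * (starRingEnd ℂ) w = 1 := by
    rw [Complex.mul_conj]
    norm_cast
    rw [← Complex.sq_norm, hw, one_pow]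
  have hden : ∀ k, 1 - (starRingEnd ℂ) (z k) * w ≠ 0 := by
    intro k hc
    have h1 : ‖(starRingEnd ℂ) (z k) * w‖ < 1 := by
      rw [norm_mul, RCLike.norm_conj, hw, mul_one]; exact hz k
    rw [sub_eq_zero] at hc
    rw [← hc, norm_one] at h1
    exact lt_irrefl _ h1
  have hsub : ∀ k, w - z k ≠ 0 := by
    intro k hc
    rw [sub_eq_zero] at hc
    exact absurd hw (by rw [hc]; exact ne_of_lt (hz k))
  have hrel : ∀ k, 1 - (starRingEnd ℂ) (z k) * w = w * (starRingEnd ℂ) (w - z k) := by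
    intro k
    rw [map_sub]
    linear_combination -hw1
  have hfnorm : ∀ k, ‖ff z k w‖ = 1 := by
    intro k
    unfold ff
    rw [norm_div, hrel k, norm_mul, hw, one_mul, RCLike.norm_conj,
      div_self (norm_ne_zero_iff.2 (hsub k))]
  set c : Fin m → ℝ := fun k => (1 - ‖z k‖ ^ 2) / ‖w - z k‖ ^ 2 with hc
  have hcnn : ∀ k, 0 ≤ c k := by
    intro k
    apply div_nonneg
    · nlinarith [hz k, norm_nonneg (z k)]
    · positivity
  have hkey : ∀ k, w * dd z k w = (c k : ℂ) * ff z k w := by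
    intro k
    have h1 : ((‖w - z k‖ : ℝ) : ℂ) ^ 2 = (w - z k) * (starRingEnd ℂ) (w - z k) := by
      rw [← Complex.ofReal_pow, Complex.sq_norm, Complex.mul_conj]
    have h2 : ((‖z k‖ : ℝ) : ℂ) ^ 2 = z k * (starRingEnd ℂ) (z k) := by
      rw [← Complex.ofReal_pow, Complex.sq_norm, Complex.mul_conj]
    unfold dd ff
    rw [hc]
    push_cast
    rw [h1, h2, hrel k]
    have e2 := hsub k
    have e3 : (starRingEnd ℂ) (w - z k) ≠ 0 := by
      intro hc
      exact e2 (by simpa using congrArg (starRingEnd ℂ) hc)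
    have hwne : w ≠ 0 := by
      intro e; rw [e, norm_zero] at hw; norm_num at hw
    set U := (starRingEnd ℂ) (w - z k) with hU
    set A := (starRingEnd ℂ) (z k) with hA
    field_simp
  have hprod : GG z w = (∏ k, ff z k w) * (1 + ∑ k, (c k : ℂ)) := by
    unfold GG
    rw [Finset.mul_sum]
    have step : ∀ k ∈ Finset.univ, w * ((∏ j ∈ Finset.univ.erase k, ff z j w) • dd z k w)
        = (c k : ℂ) * ∏ j, ff z j w := by
      intro k _
      rw [smul_eq_mul]
      calc w * ((∏ j ∈ Finset.univ.erase k, ff z j w) * dd z k w)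
          = (∏ j ∈ Finset.univ.erase k, ff z j w) * (w * dd z k w) := by ring
        _ = (∏ j ∈ Finset.univ.erase k, ff z j w) * ((c k : ℂ) * ff z k w) := by rw [hkey k]
        _ = (c k : ℂ) * (ff z k w * ∏ j ∈ Finset.univ.erase k, ff z j w) := by ring
        _ = (c k : ℂ) * ∏ j, ff z j w := by
            rw [← Finset.mul_prod_erase Finset.univ (fun j => ff z j w) (Finset.mem_univ k)]
    rw [Finset.sum_congr rfl step, ← Finset.sum_mul]
    ring
  have hp1 : ‖∏ k, ff z k w‖ = 1 := by
    rw [norm_prod]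
    simp [hfnorm]
  have hcast : (1 + ∑ k, (c k : ℂ)) = ((1 + ∑ k, c k : ℝ) : ℂ) := by
    push_cast; ring
  have hsnn : 0 ≤ ∑ k, c k := Finset.sum_nonneg fun k _ => hcnn k
  rw [hprod, norm_mul, hp1, one_mul, hcast, Complex.norm_real, Real.norm_eq_abs,
    _root_.abs_of_nonneg (by linarith : (0:ℝ) ≤ 1 + ∑ k, c k)]
  linarith

lemma diffAt_GG {m : ℕ} (z : Fin m → ℂ) (w : ℂ)
    (h : ∀ k, 1 - (starRingEnd ℂ) (z k) * w ≠ 0) :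
    DifferentiableAt ℂ (GG z) w := by
  have hf : ∀ k, DifferentiableAt ℂ (ff z k) w :=
    fun k => (hasDerivAt_ff z k w (h k)).differentiableAt
  have hdd : ∀ k, DifferentiableAt ℂ (dd z k) w := by
    intro k
    apply DifferentiableAt.div (differentiableAt_const _)
    · exact ((differentiableAt_const _).sub ((differentiableAt_const _).mul differentiableAt_id)).pow 2
    · exact pow_ne_zero 2 (h k)
  unfold GG
  apply DifferentiableAt.add
  · exact DifferentiableAt.fun_finsetProd fun k _ => hf k
  · apply differentiableAt_id.mul
    apply DifferentiableAt.fun_sum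
    intro k _
    exact (DifferentiableAt.fun_finsetProd fun j _ => hf j).smul (hdd k)

end

/-- If every critical value of `B` in the unit disk has modulus at least `1/2`,
then some critical point `ζ_l` satisfies `|B(ζ_l)/(ζ_l B'(0))| ≥ 1/2^n`. -/
theorem prop_lower_bound (n : ℕ) (hn : 2 ≤ n) (z : Fin (n - 1) → ℂ)
    (hz : ∀ k, ‖z k‖ < 1)
    (B : ℂ → ℂ)
    (hB : B = fun w => w * ∏ k, (w - z k) / (1 - (starRingEnd ℂ) (z k) * w))
    (hB0 : deriv B 0 ≠ 0)
    (hr : ∀ ζ : ℂ, ‖ζ‖ < 1 → deriv B ζ = 0 → (1 / 2 : ℝ) ≤ ‖B ζ‖) :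
    ∃ ζ : ℂ, ‖ζ‖ < 1 ∧ deriv B ζ = 0 ∧
      (1 / 2 ^ n : ℝ) ≤ ‖B ζ / (ζ * deriv B 0)‖ := by
  have hVball : ∀ w : ℂ, ‖w‖ ≤ 1 → ∀ k, 1 - (starRingEnd ℂ) (z k) * w ≠ 0 := by
    intro w hwle k hc
    have h1 : ‖(starRingEnd ℂ) (z k) * w‖ < 1 := by
      rw [norm_mul, RCLike.norm_conj]
      calc ‖z k‖ * ‖w‖ ≤ ‖z k‖ * 1 := mul_le_mul_of_nonneg_left hwle (norm_nonneg _)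
        _ < 1 := by rw [mul_one]; exact hz k
    rw [sub_eq_zero] at hc
    rw [← hc, norm_one] at h1
    exact lt_irrefl _ h1
  have hderiv : ∀ w : ℂ, ‖w‖ ≤ 1 → deriv B w = GG z w := by
    intro w hwle
    rw [hB]
    exact (hasDerivAt_BB z w (hVball w hwle)).deriv
  have hd0 : deriv B 0 = ∏ k, -(z k) := by
    rw [hderiv 0 (by simp), GG_zero]
  have hnorm0 : ‖deriv B 0‖ < 1 := by
    rw [hd0, norm_prod]
    have k0 : Fin (n - 1) := ⟨0, by omega⟩
    rw [← Finset.mul_prod_erase Finset.univ (fun k => ‖-(z k)‖) (Finset.mem_univ k0)]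
    have h1 : ∏ k ∈ Finset.univ.erase k0, ‖-(z k)‖ ≤ 1 :=
      Finset.prod_le_one (fun k _ => norm_nonneg _)
        (fun k _ => by rw [norm_neg]; exact (hz k).le)
    have h2 : ‖-(z k0)‖ < 1 := by rw [norm_neg]; exact hz k0
    calc ‖-(z k0)‖ * ∏ k ∈ Finset.univ.erase k0, ‖-(z k)‖
        ≤ ‖-(z k0)‖ * 1 := mul_le_mul_of_nonneg_left h1 (norm_nonneg _)
      _ < 1 := by rw [mul_one]; exact h2
  have hex : ∃ ζ : ℂ, ‖ζ‖ < 1 ∧ deriv B ζ = 0 := by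
    by_contra hcon
    push_neg at hcon
    have hGne : ∀ w ∈ Metric.closedBall (0:ℂ) 1, GG z w ≠ 0 := by
      intro w hwmem
      rw [Metric.mem_closedBall, dist_zero_right] at hwmem
      rcases lt_or_eq_of_le hwmem with hlt | heq
      · intro hcc
        exact hcon w hlt (by rw [hderiv w hwmem]; exact hcc)
      · intro hcc
        have h1 := norm_GG_sphere z hz w heq
        rw [hcc, norm_zero] at h1
        linarith
    have hdc : DiffContOnCl ℂ (fun w => (GG z w)⁻¹) (Metric.ball 0 1) := by
      constructor
      · intro w hwmem
        have hwlt : ‖w‖ < 1 := by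
          rwa [Metric.mem_ball, dist_zero_right] at hwmem
        exact ((diffAt_GG z w (hVball w hwlt.le)).inv
          (hGne w (Metric.ball_subset_closedBall hwmem))).differentiableWithinAt
      · rw [closure_ball (0:ℂ) one_ne_zero]
        intro w hwmem
        have hwle : ‖w‖ ≤ 1 := by
          rwa [Metric.mem_closedBall, dist_zero_right] at hwmem
        exact (((diffAt_GG z w (hVball w hwle)).continuousAt).inv₀
          (hGne w hwmem)).continuousWithinAt
    have hb : ‖(GG z 0)⁻¹‖ ≤ 1 := by
      apply Complex.norm_le_of_forall_mem_frontier_norm_le Metric.isBounded_ball hdc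
      · intro w hwf
        rw [frontier_ball (0:ℂ) one_ne_zero, mem_sphere_zero_iff_norm] at hwf
        have h1 := norm_GG_sphere z hz w hwf
        rw [norm_inv]
        have hp : (0:ℝ) < ‖GG z w‖ := by linarith
        calc ‖GG z w‖⁻¹ ≤ 1⁻¹ := by
              apply inv_anti₀ one_pos h1
          _ = 1 := inv_one
      · rw [closure_ball (0:ℂ) one_ne_zero]
        exact Metric.mem_closedBall_self zero_le_one
    rw [norm_inv] at hb
    have hp : (0:ℝ) < ‖GG z 0‖ :=
      norm_pos_iff.2 (hGne 0 (Metric.mem_closedBall_self zero_le_one))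
    have h01 : 1 ≤ ‖GG z 0‖ := by
      calc (1:ℝ) = ‖GG z 0‖⁻¹ * ‖GG z 0‖ := (inv_mul_cancel₀ (ne_of_gt hp)).symm
        _ ≤ 1 * ‖GG z 0‖ := mul_le_mul_of_nonneg_right hb hp.le
        _ = ‖GG z 0‖ := one_mul _
    have hlt1 : ‖GG z 0‖ < 1 := by
      rw [← hderiv 0 (by simp)]
      exact hnorm0
    linarith
  obtain ⟨ζ, hζ1, hζ2⟩ := hex
  have hζne : ζ ≠ 0 := by
    intro e; rw [e] at hζ2; exact hB0 hζ2
  refine ⟨ζ, hζ1, hζ2, ?_⟩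
  have hBζ := hr ζ hζ1 hζ2
  have hdenle : ‖ζ * deriv B 0‖ ≤ 1 := by
    rw [norm_mul]
    calc ‖ζ‖ * ‖deriv B 0‖ ≤ 1 * 1 :=
          mul_le_mul hζ1.le hnorm0.le (norm_nonneg _) zero_le_one
      _ = 1 := one_mul 1
  have hdenpos : (0:ℝ) < ‖ζ * deriv B 0‖ :=
    norm_pos_iff.2 (mul_ne_zero hζne hB0)
  rw [norm_div]
  have h2n : (1 / 2 ^ n : ℝ) ≤ 1 / 2 := by
    apply one_div_le_one_div_of_le two_pos
    calc (2:ℝ) = 2 ^ 1 := (pow_one 2).symm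
      _ ≤ 2 ^ n := pow_le_pow_right₀ one_le_two (by omega)
  calc (1 / 2 ^ n : ℝ) ≤ 1 / 2 := h2n
    _ ≤ ‖B ζ‖ := hBζ
    _ ≤ ‖B ζ‖ / ‖ζ * deriv B 0‖ := by
        rw [le_div_iff₀ hdenpos]
        calc ‖B ζ‖ * ‖ζ * deriv B 0‖ ≤ ‖B ζ‖ * 1 :=
              mul_le_mul_of_nonneg_left hdenle (norm_nonneg _)
          _ = ‖B ζ‖ := mul_one _
end
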